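/- Let ζ < 0 and define φ(z) = (e^z − 1)/z for z ≠ 0, φ(0) = 1. If η ≥ 2/|ζ|, then for all λ ≤ 0, the quantity φ(ηλ)(λ + ζ)(1 − (ηλ/2)φ(ηλ)) lies in the interval [(3/2)ζ, 0]. -/

import Mathlib

noncomputable def phi (z : ℝ) : ℝ := if z = 0 then 1 else (Real.exp z - 1) / z

lemma key_ineq (z : ℝ) (hz : z ≤ 0) : z * (Real.exp z + 1) ≤ 2 * (Real.exp z - 1) := by
  set f : ℝ → ℝ := fun x => 2 * (Real.exp x - 1) - x * (Real.exp x + 1) with hf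
  have hderiv : ∀ x : ℝ, HasDerivAt f (Real.exp x - 1 - x * Real.exp x) x := by
    intro x
    have h1 : HasDerivAt (fun x : ℝ => 2 * (Real.exp x - 1)) (2 * Real.exp x) x := by
      simpa using ((Real.hasDerivAt_exp x).sub_const 1).const_mul 2
    have h2 : HasDerivAt (fun x : ℝ => x * (Real.exp x + 1)) (Real.exp x + 1 + x * Real.exp x) x := by
      have := (hasDerivAt_id x).fun_mul ((Real.hasDerivAt_exp x).add_const 1)
      simp only [id] at this
      refine this.congr_deriv ?_
      ring
    have := h1.fun_sub h2
    refine this.congr_deriv ?_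
    ring
  have hdiff : Differentiable ℝ f := fun x => (hderiv x).differentiableAt
  have hanti : Antitone f := by
    apply antitone_of_deriv_nonpos hdiff
    intro x
    rw [(hderiv x).deriv]
    have h := Real.add_one_le_exp (-x)
    have hepos := (Real.exp_pos x)
    have hprod := mul_le_mul_of_nonneg_right h hepos.le
    rw [← Real.exp_add] at hprod
    simp at hprod
    nlinarith
  have := hanti hz
  simp only [hf] at this
  simp at this
  nlinarith [this]

theorem stmt_7 (ζ : ℝ) (hζ : ζ < 0) (η : ℝ) (hη : 2 / |ζ| ≤ η) (lam : ℝ) (hlam : lam ≤ 0) :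
    phi (η * lam) * (lam + ζ) * (1 - η * lam / 2 * phi (η * lam)) ∈
      Set.Icc (3 / 2 * ζ) 0 := by
  have habs : |ζ| = -ζ := abs_of_neg hζ
  rw [habs] at hη
  have hζ' : 0 < -ζ := by linarith
  have hηpos : 0 < η := lt_of_lt_of_le (div_pos two_pos hζ') hη
  have hA : η * ζ ≤ -2 := by
    have := (div_le_iff₀ hζ').mp hη
    nlinarith
  rcases eq_or_lt_of_le hlam with h0 | hlam'
  · -- lam = 0
    subst h0
    simp [phi]
    constructor <;> nlinarith
  · -- lam < 0
    have hz : η * lam < 0 := mul_neg_of_pos_of_neg hηpos hlam'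
    set z := η * lam with hzdef
    have hzne : z ≠ 0 := ne_of_lt hz
    rw [phi, if_neg hzne]
    set u := Real.exp z with hu
    have hu0 : 0 < u := Real.exp_pos z
    have hu1 : u < 1 := by
      rw [hu, ← Real.exp_zero]
      exact Real.exp_lt_exp.mpr hz
    set p : ℝ := (u - 1) / z with hp
    have hpz : p * z = u - 1 := div_mul_cancel₀ _ hzne
    have hp0 : 0 < p := div_pos_of_neg_of_neg (by linarith) hz
    have hp1 : p ≤ 1 := by
      by_contra h
      push_neg at h
      nlinarith [hpz, Real.add_one_le_exp z, mul_pos (sub_pos.mpr h) (neg_pos.mpr hz)]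
    have hmid : 2 * p ≤ 1 + u := by
      have hk := key_ineq z hz.le
      rw [← hu] at hk
      by_contra h
      push_neg at h
      nlinarith [hpz, mul_pos (by linarith : (0:ℝ) < 2*p - (1+u)) (neg_pos.mpr hz)]
    have h3 : z / 2 * p = (u - 1) / 2 := by
      rw [div_mul_eq_mul_div, mul_comm z p, hpz]
    have h4 : p * lam * η = u - 1 := by
      rw [← hpz, hzdef]; ring
    rw [h3]
    constructor
    · -- lower bound
      have key : (u - 1 + p * (η * ζ)) * (3 - u) ≥ 3 * (η * ζ) := by
        nlinarith [mul_nonneg (mul_nonneg (by linarith : (0:ℝ) ≤ 1 + u - 2*p) (by linarith : (0:ℝ) ≤ 3 - u)) (by linarith : (0:ℝ) ≤ -(η*ζ)),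
          mul_nonneg (by nlinarith : (0:ℝ) ≤ -(η*ζ) - 2) (by nlinarith : (0:ℝ) ≤ (u-1)^2 + 2)]
      have h5 : p * (lam + ζ) * (1 - (u - 1) / 2) * (2 * η) = (u - 1 + p * (η * ζ)) * (3 - u) := by
        linear_combination (3 - u) * h4
      nlinarith [key, h5, hηpos]
    · -- upper bound
      nlinarith [mul_nonneg (mul_nonneg hp0.le (by linarith : (0:ℝ) ≤ 3 - u)) (by linarith : (0:ℝ) ≤ -(lam + ζ))]
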